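/- Let A be a proper connective dg algebra over a field k, D^fd(A) the derived category of dg A-modules with finite-dimensional total cohomology, with its standard t-structure. If P is an object of D^fd(A)^{≤0} with Hom(P, M[1]) = 0 for all M ∈ D^fd(A)^{≤0} (i.e. P is derived projective), then H^0(P) is a finitely generated projective H^0(A)-module. -/

import Mathlib

open CategoryTheory Category Limits Pretriangulated Triangulated ZeroObject

universe w v u

namespace Paper

section Defs

variable {C : Type u} [Category.{v} C] [Preadditive C] [HasZeroObject C]
  [HasShift C ℤ] [∀ n : ℤ, (shiftFunctor C n).Additive] [Pretriangulated C]
  [HasFiniteBiproducts C] [HasBinaryBiproducts C]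

/-- `X` lies in `add A`: it is a direct summand of a finite direct sum of copies of `A`. -/
def inAdd (A X : C) : Prop :=
  ∃ (n : ℕ) (s : X ⟶ ⨁ fun _ : Fin n => A) (p : (⨁ fun _ : Fin n => A) ⟶ X), s ≫ p = 𝟙 X

/-- The star operation `S ∗ T` on classes of objects of a (pre)triangulated category:
objects `E` admitting a distinguished triangle `X ⟶ E ⟶ Y ⟶ X⟦1⟧` with `X ∈ S`, `Y ∈ T`. -/
def star (S T : Set C) : Set C :=
  {E | ∃ (X : C) (_ : X ∈ S) (Y : C) (_ : Y ∈ T) (f : X ⟶ E) (g : E ⟶ Y)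
    (h : Y ⟶ X⟦(1 : ℤ)⟧), Triangle.mk f g h ∈ distTriang C}

/-- `add (A⟦i⟧)` as a class of objects. -/
def addShift (A : C) (i : ℤ) : Set C := {X | inAdd (A⟦i⟧) X}

/-- `per(A)^{[-n,0]} = add(A) ∗ add(A)[1] ∗ ⋯ ∗ add(A)[n]`. -/
def perInterval (A : C) : ℕ → Set C
  | 0 => addShift A 0
  | n + 1 => star (perInterval A n) (addShift A (n + 1))

/-- `thick(DA)^{[0,n]} = add(DA)[-n] ∗ ⋯ ∗ add(DA)[-1] ∗ add(DA)`. -/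
def coInterval (DA : C) : ℕ → Set C
  | 0 => addShift DA 0
  | n + 1 => star (addShift DA (-(n + 1 : ℕ))) (coInterval DA n)

/-- The extended heart `H^d = T^{≤ 0} ∩ T^{> -d}`. -/
def Hd (t : TStructure C) (d : ℕ) : Set C := {X | t.le 0 X ∧ t.ge (1 - (d : ℤ)) X}

/-- Projectivity in the extriangulated category given by an extension-closed class `S`:
`E(P, X) = Hom(P, X⟦1⟧)` vanishes for all `X ∈ S`. -/
def projOn (S : Set C) (P : C) : Prop := ∀ X ∈ S, ∀ f : P ⟶ X⟦(1 : ℤ)⟧, f = 0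

/-- Injectivity in the extriangulated category given by an extension-closed class `S`. -/
def injOn (S : Set C) (I : C) : Prop := ∀ X ∈ S, ∀ f : X ⟶ I⟦(1 : ℤ)⟧, f = 0

/-- `p : M ⟶ N` is a deflation for the extriangulated structure on the extension-closed
class `S`: it is the second map of a distinguished triangle with all terms in `S`. -/
def isDeflation (S : Set C) {M N : C} (p : M ⟶ N) : Prop :=
  ∃ (L : C) (_ : L ∈ S) (f : L ⟶ M) (h : N ⟶ L⟦(1 : ℤ)⟧),
    Triangle.mk f p h ∈ distTriang C

/-- `i : L ⟶ M` is an inflation for the extriangulated structure on `S`. -/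
def isInflation (S : Set C) {L M : C} (i : L ⟶ M) : Prop :=
  ∃ (N : C) (_ : N ∈ S) (p : M ⟶ N) (h : N ⟶ L⟦(1 : ℤ)⟧),
    Triangle.mk i p h ∈ distTriang C

/-- `f` factors through an object of `add W`. -/
def factorsThruAdd (W : C) {X Y : C} (f : X ⟶ Y) : Prop :=
  ∃ (Q : C) (_ : inAdd W Q) (a : X ⟶ Q) (b : Q ⟶ Y), f = a ≫ b

/-- An indecomposable object: nonzero, and in any direct sum decomposition one summand
vanishes. -/
def Indec (X : C) : Prop :=
  ¬ IsZero X ∧ ∀ Y Z : C, Nonempty (X ≅ Y ⊞ Z) → IsZero Y ∨ IsZero Z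

/-- Data of the truncation functor `t^{≥ n}`, left adjoint to the inclusion of `T^{≥ n}`,
together with its unit and the truncation triangles. -/
structure TruncGEData (t : TStructure C) (n : ℤ) where
  F : C ⥤ C
  η : 𝟭 C ⟶ F
  ge : ∀ X : C, t.ge n (F.obj X)
  tri : ∀ X : C, ∃ (Z : C) (_ : t.le (n - 1) Z) (f : Z ⟶ X) (h : F.obj X ⟶ Z⟦(1 : ℤ)⟧),
    Triangle.mk f (η.app X) h ∈ distTriang C
  adj : ∀ (X W : C), t.ge n W → Function.Bijective (fun g : F.obj X ⟶ W => η.app X ≫ g)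

/-- Data of the truncation functor `t^{≤ n}`, right adjoint to the inclusion of `T^{≤ n}`,
together with its counit and the truncation triangles. -/
structure TruncLEData (t : TStructure C) (n : ℤ) where
  F : C ⥤ C
  ε : F ⟶ 𝟭 C
  le : ∀ X : C, t.le n (F.obj X)
  tri : ∀ X : C, ∃ (Z : C) (_ : t.ge (n + 1) Z) (g : X ⟶ Z) (h : Z ⟶ (F.obj X)⟦(1 : ℤ)⟧),
    Triangle.mk (ε.app X) g h ∈ distTriang C
  adj : ∀ (W X : C), t.le n W → Function.Bijective (fun g : W ⟶ F.obj X => g ≫ ε.app X)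

/-- Membership in the thick subcategory generated by `A`. -/
inductive thickMem (A : C) : C → Prop
  | base : thickMem A A
  | zero : thickMem A 0
  | iso {X Y : C} : (X ≅ Y) → thickMem A X → thickMem A Y
  | shift (X : C) (n : ℤ) : thickMem A X → thickMem A (X⟦n⟧)
  | ext₂ {X Y Z : C} {f : X ⟶ Y} {g : Y ⟶ Z} {h : Z ⟶ X⟦(1 : ℤ)⟧} :
      (Triangle.mk f g h ∈ distTriang C) → thickMem A X → thickMem A Z → thickMem A Y
  | smd {X Y : C} (s : X ⟶ Y) (p : Y ⟶ X) : s ≫ p = 𝟙 X → thickMem A Y → thickMem A X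

end Defs

/-- Abstraction of the derived category `D^fd(A)` of a proper connective dg algebra `A`
over a field `k`, with its standard t-structure: `A` is connective (cohomology in
non-positive degrees), Hom-spaces are finite dimensional (properness), the standard
t-structure is bounded on `D^fd`, `A` is derived projective and `A` generates. -/
structure DGSetup (k : Type w) [Field k] (C : Type u) [Category.{v} C] [Preadditive C]
    [HasZeroObject C] [HasShift C ℤ] [∀ n : ℤ, (shiftFunctor C n).Additive]
    [Pretriangulated C] [Linear k C] where
  t : TStructure C
  A : C
  connective : t.le 0 A
  homFinite : ∀ X Y : C, FiniteDimensional k (X ⟶ Y)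
  bounded : ∀ X : C, ∃ a b : ℤ, t.ge a X ∧ t.le b X
  A_derived_projective : ∀ X : C, t.le 0 X → ∀ f : A ⟶ X⟦(1 : ℤ)⟧, f = 0
  generates : ∀ X : C, (∀ (n : ℤ) (f : A⟦n⟧ ⟶ X), f = 0) → IsZero X

section DG

variable {k : Type w} [Field k] {C : Type u} [Category.{v} C] [Preadditive C]
  [HasZeroObject C] [HasShift C ℤ] [∀ n : ℤ, (shiftFunctor C n).Additive]
  [Pretriangulated C] [Linear k C]

/-- A derived injective object of `D^fd(A)^{≥ 0}`. -/
def DerivedInjective (S : DGSetup k C) (I : C) : Prop :=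
  S.t.ge 0 I ∧ ∀ X : C, S.t.ge 0 X → ∀ f : X ⟶ I⟦(1 : ℤ)⟧, f = 0

variable [HasFiniteBiproducts C] [HasBinaryBiproducts C]

/-- The `k`-submodule of morphisms `X ⟶ Y` factoring through `add W`. -/
def addIdeal (k : Type w) [Field k] [Linear k C] (W : C) (X Y : C) : Submodule k (X ⟶ Y) :=
  Submodule.span k {f | factorsThruAdd W f}

end DG

variable {C : Type u} [Category.{v} C] [Preadditive C] [HasZeroObject C]
  [HasShift C ℤ] [∀ n : ℤ, (shiftFunctor C n).Additive] [Pretriangulated C]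
  [HasFiniteBiproducts C] [HasBinaryBiproducts C]
  {k : Type w} [Field k] [Linear k C]

section StmtAux

lemma homZero' (t : TStructure C) {X Y : C} (n : ℤ) (hX : t.le n X) (hY : t.ge (n + 1) Y)
    (f : X ⟶ Y) : f = 0 := by
  have h1 : t.le 0 (X⟦n⟧) := t.le_shift n n 0 (by ring) X hX
  have h2 : t.ge 1 (Y⟦n⟧) := t.ge_shift (n + 1) n 1 (by ring) Y hY
  have h3 := t.zero' ((shiftFunctor C n).map f) h1 h2
  apply (shiftFunctor C n).map_injective
  rw [h3, Functor.map_zero]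

lemma le_of_homZero (t : TStructure C) {X : C} (n : ℤ)
    (h : ∀ Y : C, t.ge (n + 1) Y → ∀ f : X ⟶ Y, f = 0) : t.le n X := by
  obtain ⟨Z₁, Z₂, h₁, h₂, a, b, c, hT⟩ := t.exists_triangle X n (n + 1) rfl
  have hb : b = 0 := h _ h₂ b
  have hz : IsZero Z₂ := by
    obtain ⟨r, hr⟩ := Pretriangulated.Triangle.yoneda_exact₂ _ (rot_of_distTriang _ hT) (𝟙 Z₂)
      (by show b ≫ 𝟙 Z₂ = 0; rw [hb, zero_comp])
    have hz1 : t.le n (Z₁⟦(1 : ℤ)⟧) :=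
      t.le_monotone (show n - 1 ≤ n by omega) _ (t.le_shift n 1 (n - 1) (by ring) Z₁ h₁)
    have hr0 : r = 0 := homZero' t n hz1 h₂ r
    rw [IsZero.iff_id_eq_zero, hr, hr0]; exact comp_zero
  have : IsIso a := (Pretriangulated.Triangle.isZero₃_iff_isIso₁ _ hT).1 hz
  exact (t.le n).prop_of_iso (asIso a) h₁

lemma le₂' (t : TStructure C) {T : Pretriangulated.Triangle C} (hT : T ∈ distTriang C) (n : ℤ)
    (h₁ : t.le n T.obj₁) (h₃ : t.le n T.obj₃) : t.le n T.obj₂ := by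
  apply le_of_homZero
  intro Y hY f
  have h1 : T.mor₁ ≫ f = 0 := homZero' t n h₁ hY _
  obtain ⟨g, hg⟩ := Pretriangulated.Triangle.yoneda_exact₂ _ hT f h1
  rw [hg, homZero' t n h₃ hY g, comp_zero]

lemma le_biproduct (t : TStructure C) (n : ℤ) {m : ℕ} (F : Fin m → C)
    (h : ∀ j, t.le n (F j)) : t.le n (⨁ F) := by
  apply le_of_homZero
  intro Y hY f
  refine biproduct.hom_ext' _ _ fun j => ?_
  rw [comp_zero]
  exact homZero' t n (h j) hY _

lemma hom_zero_of_le_neg_one (t : TStructure C) {P : C}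
    (hproj : ∀ X : C, t.le 0 X → ∀ f : P ⟶ X⟦(1 : ℤ)⟧, f = 0)
    {W : C} (hW : t.le (-1) W) (g : P ⟶ W) : g = 0 := by
  have e := (shiftEquiv C (1 : ℤ)).counitIso.app W
  have h0 : t.le 0 ((shiftFunctor C (-1 : ℤ)).obj W) := t.le_shift (-1) (-1) 0 (by ring) W hW
  have hz : g ≫ e.inv = 0 := hproj _ h0 (g ≫ e.inv)
  calc g = (g ≫ e.inv) ≫ e.hom := by rw [assoc, e.inv_hom_id]; exact (comp_id g).symm
  _ = 0 := by rw [hz, zero_comp]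

lemma hom_shift_zero (t : TStructure C) {A : C}
    (hA : ∀ X : C, t.le 0 X → ∀ f : A ⟶ X⟦(1 : ℤ)⟧, f = 0)
    (m : ℤ) {X : C} (hX : t.le (-1 - m) X) (f : A⟦m⟧ ⟶ X) : f = 0 := by
  have h1 : t.le (-1) ((shiftFunctor C (-m)).obj X) :=
    t.le_shift (-1 - m) (-m) (-1) (by ring) X hX
  have e := (shiftEquiv C m).unitIso.app A
  have h2 : e.hom ≫ (shiftFunctor C (-m)).map f = 0 :=
    hom_zero_of_le_neg_one t hA h1 _
  apply (shiftFunctor C (-m)).map_injective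
  rw [Functor.map_zero]
  exact (cancel_epi e.hom).1 (h2.trans comp_zero.symm)

end StmtAux

/-- For a proper connective dg algebra `A`, if `P ∈ D^fd(A)^{≤0}` is
derived projective, then `H^0(P)` is a finitely generated projective `H^0(A)`-module.
Here `B` plays the role of `H^0(A)` and `H0` is the zeroth cohomology functor, which
kills `D^fd(A)^{≥1}` and `D^fd(A)^{≤ -1}` and sends `A` to the free module `B`. -/
theorem stmt4 (S : DGSetup k C) (B : Type w) [Ring B] [Algebra k B] [FiniteDimensional k B]
    (H0 : C ⥤ ModuleCat.{w} B) [H0.Additive]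
    (hfin : ∀ X : C, Module.Finite B (H0.obj X))
    (hv1 : ∀ X : C, S.t.ge 1 X → IsZero (H0.obj X))
    (hv2 : ∀ X : C, S.t.le (-1) X → IsZero (H0.obj X))
    (hAfree : Nonempty (H0.obj S.A ≅ ModuleCat.of B B))
    (P : C) (hP : S.t.le 0 P)
    (hproj : ∀ M : C, S.t.le 0 M → ∀ f : P ⟶ M⟦(1 : ℤ)⟧, f = 0) :
    Module.Finite B (H0.obj P) ∧ Module.Projective B (H0.obj P) := by
  classical
  refine ⟨hfin P, ?_⟩
  have := S.homFinite S.A P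
  set N := Module.finrank k (S.A ⟶ P) with hN
  let b : Module.Basis (Fin N) k (S.A ⟶ P) := Module.finBasis k (S.A ⟶ P)
  set F : Fin N → C := fun _ => S.A with hF
  set f : (⨁ F) ⟶ P := biproduct.desc fun i => b i with hf
  have hQle : S.t.le 0 (⨁ F) := le_biproduct S.t 0 F fun _ => S.connective
  have hsurj : ∀ g : S.A ⟶ P, ∃ u : S.A ⟶ ⨁ F, u ≫ f = g := by
    intro g
    refine ⟨∑ i, b.repr g i • biproduct.ι F i, ?_⟩
    rw [Preadditive.sum_comp]
    simp only [Linear.smul_comp, hf, biproduct.ι_desc]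
    exact b.sum_repr g
  obtain ⟨Cn, g, δ, hT⟩ := Pretriangulated.distinguished_cocone_triangle f
  have hCle : S.t.le 0 Cn := by
    have h3 : S.t.le 0 ((⨁ F)⟦(1 : ℤ)⟧) :=
      S.t.le_monotone (show (-1 : ℤ) ≤ 0 by omega) _
        (S.t.le_shift 0 1 (-1) (by ring) _ hQle)
    exact le₂' S.t (rot_of_distTriang _ hT) 0 hP h3
  have hACzero : ∀ h : S.A ⟶ Cn, h = 0 := by
    intro h
    have h1 : h ≫ δ = 0 := S.A_derived_projective _ hQle (h ≫ δ)
    obtain ⟨h', hh'⟩ := Pretriangulated.Triangle.coyoneda_exact₃ _ hT h h1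
    change h = h' ≫ g at hh'
    obtain ⟨u, hu⟩ := hsurj h'
    have hfg : f ≫ g = 0 := Pretriangulated.comp_distTriang_mor_zero₁₂ _ hT
    rw [hh', ← hu]; exact (assoc u f g).trans (by rw [hfg, comp_zero])
  obtain ⟨Z, W, hZ, hW, a, c, e, hT2⟩ := S.t.exists_triangle Cn (-1) 0 (by ring)
  have hWzero : IsZero W := by
    apply S.generates
    intro m φ
    rcases le_or_gt m 0 with hm | hm
    · have hZ1 : S.t.le (-1 - m) (Z⟦(1 : ℤ)⟧) :=
        S.t.le_monotone (show (-2 : ℤ) ≤ -1 - m by omega) _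
          (S.t.le_shift (-1) 1 (-2) (by ring) Z hZ)
      have hφe : φ ≫ e = 0 := hom_shift_zero S.t S.A_derived_projective m hZ1 (φ ≫ e)
      obtain ⟨ψ, hψ⟩ := Pretriangulated.Triangle.coyoneda_exact₃ _ hT2 φ hφe
      change φ = ψ ≫ c at hψ
      have hψ0 : ψ = 0 := by
        rcases lt_or_eq_of_le hm with hm1 | hm1
        · exact hom_shift_zero S.t S.A_derived_projective m
            (S.t.le_monotone (show (0 : ℤ) ≤ -1 - m by omega) _ hCle) ψ
        · subst hm1
          have e0 := ((shiftFunctorZero C ℤ).app S.A)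
          have h5 : e0.inv ≫ ψ = 0 := hACzero _
          calc ψ = e0.hom ≫ (e0.inv ≫ ψ) := by rw [Iso.hom_inv_id_assoc]
          _ = 0 := by rw [h5, comp_zero]
      rw [hψ, hψ0]; exact zero_comp
    · have hAm : S.t.le (-1) ((S.A)⟦m⟧) :=
        S.t.le_monotone (show -m ≤ (-1 : ℤ) by omega) _
          (S.t.le_shift 0 m (-m) (by ring) _ S.connective)
      exact homZero' S.t (-1) hAm (by simpa using hW) φ
  have hgzero : g = 0 := by
    have h1 : g ≫ c = 0 := hWzero.eq_of_tgt _ _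
    obtain ⟨u, hu⟩ := Pretriangulated.Triangle.coyoneda_exact₂ _ hT2 g h1
    change g = u ≫ a at hu
    have hu0 : u = 0 := hom_zero_of_le_neg_one S.t hproj hZ u
    rw [hu, hu0]; exact zero_comp
  obtain ⟨s, hs⟩ := Pretriangulated.Triangle.coyoneda_exact₂ _ hT (𝟙 P)
    (by show 𝟙 P ≫ g = 0; rw [hgzero, comp_zero])
  change 𝟙 P = s ≫ f at hs
  -- now pass to modules
  obtain ⟨eA⟩ := hAfree
  let s' : P ⟶ ⨁ F := s
  have hs' : 𝟙 P = s' ≫ f := hs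
  haveI : Module.Free B ↑(ModuleCat.of B B) := (inferInstance : Module.Free B B)
  haveI : Module.Free B (H0.obj S.A) :=
    Module.Free.of_equiv (eA.toLinearEquiv.symm)
  have hsf : H0.map s' ≫ H0.map f = 𝟙 (H0.obj P) := by
    rw [← H0.map_comp, ← hs', H0.map_id]
  have e1 : H0.obj (⨁ F) ≅ ⨁ (H0.obj ∘ F) := H0.mapBiproduct F
  have e2 : (⨁ (H0.obj ∘ F)) ≅ ModuleCat.of B (∀ _ : Fin N, H0.obj S.A) :=
    ModuleCat.biproductIsoPi _
  haveI : Module.Free B ↑(ModuleCat.of B (∀ _ : Fin N, H0.obj S.A)) :=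
    (inferInstance : Module.Free B (∀ _ : Fin N, H0.obj S.A))
  haveI : Module.Projective B (ModuleCat.of B (∀ _ : Fin N, H0.obj S.A)) :=
    Module.Projective.of_free
  haveI : Module.Projective B (H0.obj (⨁ F)) :=
    Module.Projective.of_equiv (e1 ≪≫ e2).toLinearEquiv.symm
  exact Module.Projective.of_split (H0.map s').hom (H0.map f).hom
    (by rw [← ModuleCat.hom_comp, hsf, ModuleCat.hom_id])


end Paper
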